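/- Let λ₁, …, λₙ be vectors spanning ℝ^d, and for t ∈ ℝ^d let M(t) : ℝⁿ → ℝⁿ be the diagonal linear map whose i-th diagonal entry is e^{⟨λᵢ, t⟩} (where ⟨·,·⟩ is the standard inner product on ℝ^d). Suppose V ⊆ ℝⁿ is a subset invariant under every M(t), and suppose there exist a sequence (t_p) in ℝ^d with ‖t_p‖ → ∞ and a sequence (x_p) in V such that x_p converges to some x ∈ V and M(t_p)·x_p converges to some y ∈ V. Then there exists a nonzero vector t₀ ∈ ℝ^d such that for every index i: if ⟨λᵢ, t₀⟩ > 0 then the i-th coordinate of x is 0, and if ⟨λᵢ, t₀⟩ < 0 then the i-th coordinate of y is 0. -/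

import Mathlib

open scoped RealInnerProductSpace

/-- Non-properness of a diagonal abelian action: if vectors `lam i` span `ℝ^d`,
`V ⊆ ℝ^n` is invariant under every diagonal map `M t = diag (exp ⟪lam i, t⟫)`,
and there are sequences `t p → ∞`, `xs p ∈ V` with `xs p → x` and `M (t p) (xs p) → y`,
then some nonzero `t₀` satisfies: `⟪lam i, t₀⟫ > 0 → x i = 0` and
`⟪lam i, t₀⟫ < 0 → y i = 0`. -/
theorem nonproper_diagonal_action (d n : ℕ)
    (lam : Fin n → EuclideanSpace ℝ (Fin d))
    (hspan : Submodule.span ℝ (Set.range lam) = ⊤)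
    (V : Set (Fin n → ℝ))
    (hV : ∀ t : EuclideanSpace ℝ (Fin d), ∀ v ∈ V,
      (fun i => Real.exp ⟪lam i, t⟫ * v i) ∈ V)
    (t : ℕ → EuclideanSpace ℝ (Fin d))
    (ht : Filter.Tendsto (fun p => ‖t p‖) Filter.atTop Filter.atTop)
    (xs : ℕ → (Fin n → ℝ)) (hxs : ∀ p, xs p ∈ V)
    (x y : Fin n → ℝ) (hx : x ∈ V) (hy : y ∈ V)
    (hxlim : Filter.Tendsto xs Filter.atTop (nhds x))
    (hylim : Filter.Tendsto (fun p => fun i => Real.exp ⟪lam i, t p⟫ * xs p i)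
      Filter.atTop (nhds y)) :
    ∃ t₀ : EuclideanSpace ℝ (Fin d), t₀ ≠ 0 ∧
      ∀ i : Fin n, ((0 : ℝ) < ⟪lam i, t₀⟫ → x i = 0) ∧ (⟪lam i, t₀⟫ < (0 : ℝ) → y i = 0) := by
  classical
  set u : ℕ → EuclideanSpace ℝ (Fin d) := fun p => ‖t p‖⁻¹ • t p with hu
  have hub : ∀ p, ‖u p‖ ≤ 1 := by
    intro p
    by_cases h : t p = 0
    · simp [u, h]
    · simp [u, norm_smul, abs_of_nonneg,
        inv_mul_cancel₀ (norm_ne_zero_iff.mpr h)]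
  obtain ⟨t₀, -, φ, hφ, hconv⟩ :=
    tendsto_subseq_of_bounded
      (Metric.isBounded_closedBall (x := (0 : EuclideanSpace ℝ (Fin d))) (r := 1))
      (fun p => by simpa [Metric.mem_closedBall, dist_zero_right] using hub p)
  have hφt : Filter.Tendsto φ Filter.atTop Filter.atTop := hφ.tendsto_atTop
  have hev : ∀ᶠ p in Filter.atTop, 1 ≤ ‖t (φ p)‖ := hφt.eventually (ht.eventually_ge_atTop 1)
  have hnorm1 : ‖t₀‖ = 1 := by
    have h1 : Filter.Tendsto (fun p => ‖u (φ p)‖) Filter.atTop (nhds ‖t₀‖) := hconv.norm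
    have h2 : ∀ᶠ p in Filter.atTop, ‖u (φ p)‖ = 1 := hev.mono (fun p hp => by
      have hne : ‖t (φ p)‖ ≠ 0 := by linarith
      simp [u, norm_smul, abs_of_nonneg, inv_mul_cancel₀ hne])
    exact tendsto_nhds_unique h1
      ((tendsto_const_nhds : Filter.Tendsto (fun _ : ℕ => (1 : ℝ)) _ _).congr'
        (h2.mono fun p hp => hp.symm))
  refine ⟨t₀, fun h0 => by simp [h0] at hnorm1, fun i => ?_⟩
  -- limits of coordinates
  have hxi : Filter.Tendsto (fun p => xs (φ p) i) Filter.atTop (nhds (x i)) :=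
    ((tendsto_pi_nhds.mp hxlim i).comp hφt)
  have hyi : Filter.Tendsto (fun p => Real.exp ⟪lam i, t (φ p)⟫ * xs (φ p) i)
      Filter.atTop (nhds (y i)) := ((tendsto_pi_nhds.mp hylim i).comp hφt)
  have hinner : Filter.Tendsto (fun p => ⟪lam i, u (φ p)⟫) Filter.atTop
      (nhds ⟪lam i, t₀⟫) := Filter.Tendsto.inner tendsto_const_nhds hconv
  have hnormφ : Filter.Tendsto (fun p => ‖t (φ p)‖) Filter.atTop Filter.atTop :=
    ht.comp hφt
  have heq : ∀ᶠ p in Filter.atTop,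
      ‖t (φ p)‖ * ⟪lam i, u (φ p)⟫ = ⟪lam i, t (φ p)⟫ := hev.mono (fun p hp => by
    have hne : ‖t (φ p)‖ ≠ 0 := by linarith
    simp only [u, real_inner_smul_right]
    rw [← mul_assoc, mul_inv_cancel₀ hne, one_mul])
  constructor
  · intro hc
    have hT : Filter.Tendsto (fun p => ⟪lam i, t (φ p)⟫) Filter.atTop Filter.atTop :=
      (hnormφ.atTop_mul_pos hc hinner).congr' heq
    have hexp : Filter.Tendsto (fun p => Real.exp (-⟪lam i, t (φ p)⟫))
        Filter.atTop (nhds 0) :=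
      Real.tendsto_exp_atBot.comp (Filter.tendsto_neg_atBot_iff.mpr hT)
    have hkey : Filter.Tendsto (fun p => Real.exp (-⟪lam i, t (φ p)⟫) *
        (Real.exp ⟪lam i, t (φ p)⟫ * xs (φ p) i)) Filter.atTop (nhds 0) := by
      have := hexp.mul hyi
      simpa using this
    have hkey' : Filter.Tendsto (fun p => xs (φ p) i) Filter.atTop (nhds 0) := by
      refine hkey.congr (fun p => ?_)
      rw [← mul_assoc, ← Real.exp_add]
      simp
    exact tendsto_nhds_unique hxi hkey'
  · intro hc
    have hT : Filter.Tendsto (fun p => ⟪lam i, t (φ p)⟫) Filter.atTop Filter.atBot :=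
      (hnormφ.atTop_mul_neg hc hinner).congr' heq
    have hexp : Filter.Tendsto (fun p => Real.exp ⟪lam i, t (φ p)⟫)
        Filter.atTop (nhds 0) := Real.tendsto_exp_atBot.comp hT
    have hkey : Filter.Tendsto (fun p => Real.exp ⟪lam i, t (φ p)⟫ * xs (φ p) i)
        Filter.atTop (nhds 0) := by
      have := hexp.mul hxi
      simpa using this
    exact tendsto_nhds_unique hyi hkey
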